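/- arXiv:1210.5648 — 2 statements merged into one kernel-verified Lean document; each statement's English description precedes it below -/
import Mathlib

section
/- Let x be uniform on Z_3 and let (y,z) be distributed, conditioned on x = a, uniformly over the six pairs (a,a+1), (a,a+2), (a+1,a), (a+1,a+1), (a+2,a), (a+2,a+2). Then for β, γ ∈ Z_3: E[ω^{βy + γz} | x = a] equals (−1/2)^{[β≠0]}·ω^{2aβ} if β = γ, and equals 0 if β ≠ γ. -/
open Finset

noncomputable def ω : ℂ := Complex.exp (2 * Real.pi * Complex.I / 3)

lemma hprim : IsPrimitiveRoot ω 3 := by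
  have := Complex.isPrimitiveRoot_exp 3 (by norm_num)
  convert this using 2
  simp [ω]

lemma hωsum : 1 + ω + ω ^ 2 = 0 := by
  simpa [Finset.sum_range_succ] using hprim.geom_sum_eq_zero (by norm_num)

lemma hv (x : ZMod 3) : ω ^ x.val = if x = 0 then 1 else if x = 1 then ω else ω ^ 2 := by
  have h : ∀ x : ZMod 3, x = 0 ∨ x = 1 ∨ x = 2 := by decide
  rcases h x with rfl | rfl | rfl
  · norm_num
  · norm_num [show ZMod.val (1 : ZMod 3) = 1 from rfl]
  · norm_num [show ZMod.val (2 : ZMod 3) = 2 from rfl, (by decide : (2:ZMod 3) ≠ 0), (by decide : (2:ZMod 3) ≠ 1)]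

/-- With `(y,z)` uniform on the six pairs `(a,a+1),(a,a+2),(a+1,a),(a+1,a+1),(a+2,a),(a+2,a+2)`,
`E[ω^{βy+γz}]` equals `(-1/2)^{[β≠0]}·ω^{2aβ}` if `β = γ`, and `0` otherwise. -/
theorem stmt7 (a β γ : ZMod 3) :
    ([(a, a+1), (a, a+2), (a+1, a), (a+1, a+1), (a+2, a), (a+2, a+2)].map
        (fun p : ZMod 3 × ZMod 3 => ω ^ (β * p.1 + γ * p.2).val)).sum / 6
      = if β = γ then (if β = 0 then 1 else (-(1 : ℂ)/2)) * ω ^ (2 * a * β).val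
        else 0 := by
  have hs := hωsum
  have h : ∀ x : ZMod 3, x = 0 ∨ x = 1 ∨ x = 2 := by decide
  rcases h a with rfl | rfl | rfl <;> rcases h β with rfl | rfl | rfl <;>
    rcases h γ with rfl | rfl | rfl <;>
    simp only [List.map_cons, List.map_nil, List.sum_cons, List.sum_nil, hv] <;>
    simp (config := { decide := true }) only [if_true, if_false, eq_self_iff_true] <;>
    first
      | linear_combination hs / 6
      | linear_combination hs / 3
      | linear_combination hs / 2
      | linear_combination -hs / 6
      | linear_combination -hs / 3
      | linear_combination -hs / 2
      | ring1
end

section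
/- For g : Z_3^L → U₃ and the test distribution (y,z) as before: Re E[g(y)·conj(g(z))] ≤ Even(g), where Even(g) = Σ_{|α| ≡ 0 mod 3} |ĝ(α)|². -/
open Finset
lemma hω3 : ω ^ 3 = 1 := hprim.pow_eq_one
noncomputable def e (a : ZMod 3) : ℂ := ω ^ a.val

lemma pow_val_mod (n : ℕ) : ω ^ (n % 3) = ω ^ n := by
  conv_rhs => rw [← Nat.div_add_mod n 3]
  rw [pow_add, pow_mul, hω3, one_pow, one_mul]

lemma e_add (a b : ZMod 3) : e (a + b) = e a * e b := by
  unfold e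
  rw [ZMod.val_add, pow_val_mod, pow_add]

lemma e_zero : e 0 = 1 := rfl
lemma e_one : e 1 = ω := by unfold e; rw [show (1 : ZMod 3).val = 1 from rfl, pow_one]
lemma e_two : e 2 = ω ^ 2 := rfl

lemma e_ne_zero (a : ZMod 3) : e a ≠ 0 := pow_ne_zero _ (Complex.exp_ne_zero _)

lemma e_conj (a : ZMod 3) : (starRingEnd ℂ) (e a) = e (-a) := by
  have h1 : e a * e (-a) = 1 := by rw [← e_add]; simp [e_zero]
  have habs : ‖ω‖ = 1 := by
    unfold ω
    rw [show (2 * Real.pi * Complex.I / 3 : ℂ) = (2 * Real.pi / 3 : ℝ) * Complex.I by push_cast; ring]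
    exact Complex.norm_exp_ofReal_mul_I _
  have hn : ‖ω‖ = 1 := by exact habs
  have h2 : (starRingEnd ℂ) (e a) * e a = 1 := by
    rw [Complex.conj_mul']
    unfold e
    rw [norm_pow, hn]; norm_num
  calc (starRingEnd ℂ) (e a) = (starRingEnd ℂ) (e a) * (e a * e (-a)) := by rw [h1, mul_one]
    _ = ((starRingEnd ℂ) (e a) * e a) * e (-a) := by ring
    _ = e (-a) := by rw [h2, one_mul]

lemma sum3 (f : ZMod 3 → ℂ) : ∑ a : ZMod 3, f a = f 0 + f 1 + f 2 := by
  have h : (univ : Finset (ZMod 3)) = {0, 1, 2} := by decide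
  rw [h, Finset.sum_insert (by decide), Finset.sum_insert (by decide), Finset.sum_singleton]
  ring

lemma orth (c : ZMod 3) : ∑ a : ZMod 3, e (c * a) = if c = 0 then 3 else 0 := by
  fin_cases c
  · show ∑ a : ZMod 3, e (0 * a) = if (0:ZMod 3) = 0 then 3 else 0
    rw [sum3]
    norm_num [show ((0:ZMod 3) * 0) = 0 from rfl, show ((0:ZMod 3) * 1) = 0 from rfl,
      show ((0:ZMod 3) * 2) = 0 from rfl, e_zero]
  · show ∑ a : ZMod 3, e (1 * a) = if (1:ZMod 3) = 0 then 3 else 0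
    rw [sum3]
    rw [show ((1:ZMod 3) * 0) = 0 from rfl, show ((1:ZMod 3) * 1) = 1 from rfl,
      show ((1:ZMod 3) * 2) = 2 from rfl, e_zero, e_one, e_two]
    rw [if_neg (by decide)]
    linear_combination hωsum
  · show ∑ a : ZMod 3, e (2 * a) = if (2:ZMod 3) = 0 then 3 else 0
    rw [sum3]
    rw [show ((2:ZMod 3) * 0) = 0 from rfl, show ((2:ZMod 3) * 1) = 2 from rfl,
      show ((2:ZMod 3) * 2) = 1 from rfl, e_zero, e_one, e_two]
    rw [if_neg (by decide)]
    linear_combination hωsum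

lemma e_sum {ι : Type*} (s : Finset ι) (f : ι → ZMod 3) :
    e (∑ i ∈ s, f i) = ∏ i ∈ s, e (f i) := by
  induction s using Finset.cons_induction with
  | empty => simp [e_zero]
  | cons a s ha ih => rw [Finset.sum_cons, Finset.prod_cons, e_add, ih]

noncomputable def fhat {ι : Type*} [Fintype ι] [DecidableEq ι] (f : (ι → ZMod 3) → ℂ)
    (α : ι → ZMod 3) : ℂ :=
  (∑ x : ι → ZMod 3, f x * (starRingEnd ℂ) (ω ^ (∑ i, α i * x i).val)) /
    (Fintype.card (ι → ZMod 3) : ℂ)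

lemma fhat_eq {ι : Type*} [Fintype ι] [DecidableEq ι] (f : (ι → ZMod 3) → ℂ)
    (α : ι → ZMod 3) :
    fhat f α = (∑ x : ι → ZMod 3, f x * e (-∑ i, α i * x i)) /
      (Fintype.card (ι → ZMod 3) : ℂ) := by
  unfold fhat
  congr 1
  refine Finset.sum_congr rfl fun x _ => ?_
  rw [show (ω ^ (∑ i, α i * x i).val) = e (∑ i, α i * x i) from rfl, e_conj]

lemma char_sum {ι : Type*} [Fintype ι] [DecidableEq ι] (c : ι → ZMod 3) :
    ∑ α : ι → ZMod 3, e (∑ i, α i * c i)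
      = if c = 0 then (Fintype.card (ι → ZMod 3) : ℂ) else 0 := by
  have h1 : ∀ α : ι → ZMod 3, e (∑ i, α i * c i) = ∏ i, e (α i * c i) :=
    fun α => e_sum _ _
  simp_rw [h1]
  have hps := Finset.prod_univ_sum (fun _ : ι => (univ : Finset (ZMod 3))) (fun i a => e (a * c i))
  rw [Fintype.piFinset_univ] at hps
  rw [← hps]
  by_cases hc : c = 0
  · subst hc
    rw [if_pos rfl]
    simp only [Pi.zero_apply, mul_zero, e_zero, Finset.sum_const, Finset.card_univ,
      Finset.prod_const]
    rw [Fintype.card_fun]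
    norm_num [ZMod.card]
  · rw [if_neg hc]
    obtain ⟨i, hi⟩ : ∃ i, c i ≠ 0 := by
      by_contra h
      push_neg at h
      exact hc (funext h)
    apply Finset.prod_eq_zero (Finset.mem_univ i)
    have := orth (c i)
    simp_rw [mul_comm (c i) _] at this
    rw [this, if_neg hi]

lemma inversion {ι : Type*} [Fintype ι] [DecidableEq ι] (f : (ι → ZMod 3) → ℂ)
    (y : ι → ZMod 3) :
    f y = ∑ α : ι → ZMod 3, fhat f α * e (∑ i, α i * y i) := by
  have hN : ((Fintype.card (ι → ZMod 3) : ℂ)) ≠ 0 :=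
    Nat.cast_ne_zero.mpr Fintype.card_ne_zero
  simp_rw [fhat_eq, div_mul_eq_mul_div, Finset.sum_mul, Finset.sum_div]
  rw [Finset.sum_comm]
  have key : ∀ x : ι → ZMod 3,
      ∑ α : ι → ZMod 3, f x * e (-∑ i, α i * x i) * e (∑ i, α i * y i)
        = f x * (if (fun i => y i - x i) = 0 then (Fintype.card (ι → ZMod 3) : ℂ) else 0) := by
    intro x
    rw [← char_sum (fun i => y i - x i), Finset.mul_sum]
    refine Finset.sum_congr rfl fun α _ => ?_
    rw [mul_assoc, ← e_add]
    congr 2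
    simp_rw [mul_sub]
    rw [Finset.sum_sub_distrib]
    ring
  have key2 : ∀ x : ι → ZMod 3,
      ∑ α : ι → ZMod 3, f x * e (-∑ i, α i * x i) * e (∑ i, α i * y i)
          / (Fintype.card (ι → ZMod 3) : ℂ)
        = if x = y then f x else 0 := by
    intro x
    rw [← Finset.sum_div, key x]
    by_cases hxy : x = y
    · subst hxy
      rw [if_pos rfl, if_pos (by funext i; simp)]
      field_simp
    · rw [if_neg hxy, if_neg, mul_zero, zero_div]
      intro h
      apply hxy
      funext i
      have := congrFun h i
      simp only [Pi.zero_apply] at this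
      have := sub_eq_zero.mp this
      exact this.symm
  simp_rw [key2]
  rw [Finset.sum_ite_eq' Finset.univ y f, if_pos (Finset.mem_univ y)]

noncomputable def coef (a b : ZMod 3) : ℂ :=
  if a = 0 ∧ b = 0 then 1 else if a ≠ 0 ∧ b = 2 * a then -(1/2) else 0

lemma zmod3_cases : ∀ a : ZMod 3, a = 0 ∨ a = 1 ∨ a = 2 := by decide

lemma e_cases (a : ZMod 3) : e a = if a = 0 then 1 else if a = 1 then ω else (-1 - ω) := by
  rcases zmod3_cases a with h | h | h <;> subst h
  · simp [e_zero]
  · rw [e_one, if_neg (by decide), if_pos rfl]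
  · rw [e_two, if_neg (by decide), if_neg (by decide)]
    linear_combination hωsum

set_option maxHeartbeats 1000000 in
lemma S_eq (a b c : ZMod 3) :
    ∑ u : ZMod 3, ∑ v : ZMod 3, (if u + v = 2*c then (0:ℂ) else 1/6) * e (a*u - b*v)
      = coef a b * e ((a - b) * c) := by
  rcases zmod3_cases a with h | h | h <;> subst h <;>
  rcases zmod3_cases b with h | h | h <;> subst h <;>
  rcases zmod3_cases c with h | h | h <;> subst h <;>
    · simp (config := { decide := true }) only [sum3, e_cases, coef]
      norm_num
      try ring

lemma coef_eq_zero {a b : ZMod 3} (h : b ≠ 2 * a) : coef a b = 0 := by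
  unfold coef
  rw [if_neg, if_neg]
  · rintro ⟨-, h2⟩; exact h h2
  · rintro ⟨h1, h2⟩
    apply h
    rw [h1, h2, mul_zero]

lemma coef_neg (a : ZMod 3) : coef a (-a) = if a = 0 then 1 else -(1/2) := by
  rcases zmod3_cases a with h | h | h <;> subst h <;>
    simp (config := { decide := true }) only [coef] <;> norm_num

def pi3 {K d : ℕ} (α : Fin K × Fin d → ZMod 3) : Fin K → ZMod 3 :=
  fun i => ∑ j, α (i, j)

def nsupp {ι : Type*} [Fintype ι] (α : ι → ZMod 3) : ℕ :=
  (univ.filter (fun i => α i ≠ 0)).card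

noncomputable def wt {K d : ℕ} (x : Fin K → ZMod 3) (y z : Fin K × Fin d → ZMod 3) : ℝ :=
  (1 / 3 ^ K) * ∏ p : Fin K × Fin d, (if y p + z p = 2 * x p.1 then (0 : ℝ) else 1/6)

noncomputable def evenPart {ι : Type*} [Fintype ι] [DecidableEq ι]
    (g : (ι → ZMod 3) → ℂ) : ℝ :=
  ∑ α ∈ univ.filter (fun α : ι → ZMod 3 => (∑ i, α i) = 0), ‖fhat g α‖^2

lemma wt_cast {K d : ℕ} (x : Fin K → ZMod 3) (y z : Fin K × Fin d → ZMod 3) :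
    (wt x y z : ℂ) = (1/3^K : ℂ) *
      ∏ p : Fin K × Fin d, (if y p + z p = 2 * x p.1 then (0:ℂ) else 1/6) := by
  unfold wt
  push_cast [apply_ite (fun r : ℝ => (r : ℂ))]
  norm_num

lemma sum_yz {K d : ℕ} (x : Fin K → ZMod 3) (α β : Fin K × Fin d → ZMod 3) :
    ∑ y : Fin K × Fin d → ZMod 3, ∑ z : Fin K × Fin d → ZMod 3,
        (wt x y z : ℂ) * e (∑ p, α p * y p) * e (-∑ p, β p * z p)
      = (1/3^K : ℂ) * ∏ p : Fin K × Fin d, (coef (α p) (β p) * e ((α p - β p) * x p.1)) := by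
  have step1 : ∀ y z : Fin K × Fin d → ZMod 3,
      (wt x y z : ℂ) * e (∑ p, α p * y p) * e (-∑ p, β p * z p)
        = (1/3^K : ℂ) * ∏ p : Fin K × Fin d,
            ((if y p + z p = 2 * x p.1 then (0:ℂ) else 1/6) * e (α p * y p - β p * z p)) := by
    intro y z
    rw [wt_cast]
    rw [e_sum univ (fun p => α p * y p)]
    rw [show (-∑ p : Fin K × Fin d, β p * z p) = ∑ p : Fin K × Fin d, -(β p * z p) by
      rw [Finset.sum_neg_distrib]]
    rw [e_sum univ (fun p => -(β p * z p))]
    rw [mul_assoc, mul_assoc, ← Finset.prod_mul_distrib, ← Finset.prod_mul_distrib]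
    congr 1
    refine Finset.prod_congr rfl fun p _ => ?_
    rw [← e_add, ← sub_eq_add_neg]
  simp_rw [step1, ← Finset.mul_sum]
  congr 1
  have hin : ∀ y : Fin K × Fin d → ZMod 3,
      ∑ z : Fin K × Fin d → ZMod 3, ∏ p : Fin K × Fin d,
          ((if y p + z p = 2 * x p.1 then (0:ℂ) else 1/6) * e (α p * y p - β p * z p))
        = ∏ p : Fin K × Fin d, ∑ v : ZMod 3,
            ((if y p + v = 2 * x p.1 then (0:ℂ) else 1/6) * e (α p * y p - β p * v)) := by
    intro y
    have hps := Finset.prod_univ_sum (fun _ : Fin K × Fin d => (univ : Finset (ZMod 3)))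
      (fun p v => (if y p + v = 2 * x p.1 then (0:ℂ) else 1/6) * e (α p * y p - β p * v))
    rw [Fintype.piFinset_univ] at hps
    rw [← hps]
  simp_rw [hin]
  have hps2 := Finset.prod_univ_sum (fun _ : Fin K × Fin d => (univ : Finset (ZMod 3)))
    (fun p u => ∑ v : ZMod 3, (if u + v = 2 * x p.1 then (0:ℂ) else 1/6) * e (α p * u - β p * v))
  rw [Fintype.piFinset_univ] at hps2
  rw [← hps2]
  refine Finset.prod_congr rfl fun p _ => ?_
  exact S_eq (α p) (β p) (x p.1)

lemma W_eq {K d : ℕ} (α β : Fin K × Fin d → ZMod 3) :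
    ∑ x : Fin K → ZMod 3, ∑ y : Fin K × Fin d → ZMod 3, ∑ z : Fin K × Fin d → ZMod 3,
        (wt x y z : ℂ) * e (∑ p, α p * y p) * e (-∑ p, β p * z p)
      = (∏ p : Fin K × Fin d, coef (α p) (β p)) *
          (if pi3 (α - β) = 0 then 1 else 0) := by
  simp_rw [sum_yz]
  have hsplit : ∀ x : Fin K → ZMod 3,
      (∏ p : Fin K × Fin d, (coef (α p) (β p) * e ((α p - β p) * x p.1)))
        = (∏ p : Fin K × Fin d, coef (α p) (β p)) *
            ∏ i : Fin K, e (pi3 (α - β) i * x i) := by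
    intro x
    rw [Finset.prod_mul_distrib]
    congr 1
    rw [Fintype.prod_prod_type]
    refine Finset.prod_congr rfl fun i _ => ?_
    rw [← e_sum]
    congr 1
    rw [show pi3 (α - β) i * x i = ∑ j, (α - β) (i, j) * x i from by
      rw [pi3, Finset.sum_mul]]
    rfl
  simp_rw [hsplit, ← Finset.mul_sum]
  have hx : ∑ x : Fin K → ZMod 3, ∏ i : Fin K, e (pi3 (α - β) i * x i)
      = if pi3 (α - β) = 0 then ((3:ℂ)^K) else 0 := by
    have h1 : ∀ x : Fin K → ZMod 3, ∏ i : Fin K, e (pi3 (α - β) i * x i)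
        = e (∑ i, x i * pi3 (α - β) i) := by
      intro x
      rw [e_sum]
      exact Finset.prod_congr rfl fun i _ => by rw [mul_comm]
    simp_rw [h1]
    rw [char_sum (fun i => pi3 (α - β) i)]
    have hc : Fintype.card (Fin K → ZMod 3) = 3 ^ K := by
      rw [Fintype.card_fun]; norm_num [ZMod.card]
    rw [hc]
    push_cast
    rfl
  rw [hx]
  have h3 : ((3:ℂ)^K) ≠ 0 := by norm_num
  by_cases hp : pi3 (α - β) = 0
  · rw [if_pos hp, if_pos hp]
    rw [mul_comm (1/3^K : ℂ) _, mul_assoc]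
    congr 1
    field_simp
  · rw [if_neg hp, if_neg hp]
    ring

lemma pi3_neg {K d : ℕ} (α : Fin K × Fin d → ZMod 3) (i : Fin K) :
    pi3 (-α) i = -(pi3 α i) := by
  rw [pi3, pi3, ← Finset.sum_neg_distrib]
  rfl

lemma pi3_neg_eq_zero {K d : ℕ} (α : Fin K × Fin d → ZMod 3) :
    pi3 (-α) = 0 ↔ pi3 α = 0 := by
  constructor <;> intro h <;> funext i <;> have := congrFun h i <;>
    simp only [pi3_neg, Pi.zero_apply, neg_eq_zero] at this ⊢ <;> exact this

lemma nsupp_neg {ι : Type*} [Fintype ι] (α : ι → ZMod 3) : nsupp (-α) = nsupp α := by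
  unfold nsupp
  congr 1
  apply Finset.filter_congr
  intro i _
  simp

/-- For `U₃`-valued `g` and the test distribution: `Re E[g(y)·conj(g(z))] ≤ Even(g)`. -/
theorem stmt14 (K d : ℕ) (hK : 0 < K) (hd : 1 ≤ d)
    (g : (Fin K × Fin d → ZMod 3) → ℂ) (hgU : ∀ y, g y ∈ ({1, ω, ω^2} : Set ℂ)) :
    (∑ x : Fin K → ZMod 3, ∑ y : Fin K × Fin d → ZMod 3, ∑ z : Fin K × Fin d → ZMod 3,
        (wt x y z : ℂ) * g y * (starRingEnd ℂ) (g z)).re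
      ≤ evenPart g := by
  classical
  let G := Fin K × Fin d → ZMod 3
  -- pointwise Fourier expansion
  have hgz : ∀ z : G, (starRingEnd ℂ) (g z)
      = ∑ β : G, (starRingEnd ℂ) (fhat g β) * e (-∑ p, β p * z p) := by
    intro z
    rw [inversion g z, map_sum]
    refine Finset.sum_congr rfl fun β _ => ?_
    rw [map_mul, e_conj]
  have hpoint : ∀ (x : Fin K → ZMod 3) (y z : G),
      (wt x y z : ℂ) * g y * (starRingEnd ℂ) (g z)
        = ∑ q : G × G, (fhat g q.1 * (starRingEnd ℂ) (fhat g q.2)) *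
            ((wt x y z : ℂ) * e (∑ p, q.1 p * y p) * e (-∑ p, q.2 p * z p)) := by
    intro x y z
    rw [Fintype.sum_prod_type]
    rw [show g y = ∑ α : G, fhat g α * e (∑ p, α p * y p) from inversion g y, hgz z]
    rw [mul_assoc, Finset.sum_mul_sum]
    simp_rw [Finset.mul_sum]
    refine Finset.sum_congr rfl fun a _ => ?_
    refine Finset.sum_congr rfl fun b _ => ?_
    ring
  have hZ : (∑ x : Fin K → ZMod 3, ∑ y : G, ∑ z : G,
        (wt x y z : ℂ) * g y * (starRingEnd ℂ) (g z))
      = ∑ q : G × G, (fhat g q.1 * (starRingEnd ℂ) (fhat g q.2)) *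
          (∑ x : Fin K → ZMod 3, ∑ y : G, ∑ z : G,
            (wt x y z : ℂ) * e (∑ p, q.1 p * y p) * e (-∑ p, q.2 p * z p)) := by
    simp_rw [hpoint]
    have c1 : ∀ (x : Fin K → ZMod 3) (y : G),
        (∑ z : G, ∑ q : G × G, (fhat g q.1 * (starRingEnd ℂ) (fhat g q.2)) *
            ((wt x y z : ℂ) * e (∑ p, q.1 p * y p) * e (-∑ p, q.2 p * z p)))
          = ∑ q : G × G, ∑ z : G, (fhat g q.1 * (starRingEnd ℂ) (fhat g q.2)) *
            ((wt x y z : ℂ) * e (∑ p, q.1 p * y p) * e (-∑ p, q.2 p * z p)) :=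
      fun x y => Finset.sum_comm
    simp_rw [c1]
    have c2 : ∀ (x : Fin K → ZMod 3),
        (∑ y : G, ∑ q : G × G, ∑ z : G, (fhat g q.1 * (starRingEnd ℂ) (fhat g q.2)) *
            ((wt x y z : ℂ) * e (∑ p, q.1 p * y p) * e (-∑ p, q.2 p * z p)))
          = ∑ q : G × G, ∑ y : G, ∑ z : G, (fhat g q.1 * (starRingEnd ℂ) (fhat g q.2)) *
            ((wt x y z : ℂ) * e (∑ p, q.1 p * y p) * e (-∑ p, q.2 p * z p)) :=
      fun x => Finset.sum_comm
    simp_rw [c2]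
    rw [Finset.sum_comm]
    simp_rw [← Finset.mul_sum]
  rw [hZ]
  have hW : ∀ q : G × G,
      (∑ x : Fin K → ZMod 3, ∑ y : G, ∑ z : G,
          (wt x y z : ℂ) * e (∑ p, q.1 p * y p) * e (-∑ p, q.2 p * z p))
        = (∏ p : Fin K × Fin d, coef (q.1 p) (q.2 p)) *
            (if pi3 (q.1 - q.2) = 0 then 1 else 0) := fun q => W_eq q.1 q.2
  simp_rw [hW]
  rw [Fintype.sum_prod_type]
  -- collapse the β sum
  have h2u : ∀ u : ZMod 3, 2 * u = -u := by decide
  have hβ : ∀ α : G,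
      (∑ β : G, (fhat g α * (starRingEnd ℂ) (fhat g β)) *
          ((∏ p : Fin K × Fin d, coef (α p) (β p)) * (if pi3 (α - β) = 0 then 1 else 0)))
        = (fhat g α * (starRingEnd ℂ) (fhat g (-α))) *
            ((-(1/2) : ℂ)^(nsupp α) * (if pi3 α = 0 then 1 else 0)) := by
    intro α
    rw [Finset.sum_eq_single (-α)]
    · congr 2
      · -- product of coef
        have : ∀ p : Fin K × Fin d, coef (α p) ((-α) p) = if α p = 0 then (1:ℂ) else -(1/2) := by
          intro p
          rw [show (-α) p = -(α p) from rfl, coef_neg]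
        simp_rw [this]
        rw [Finset.prod_ite, Finset.prod_const, Finset.prod_const, one_pow, one_mul]
        congr 1
      · -- the ite condition
        have hcond : (pi3 (α - -α) = 0) ↔ (pi3 α = 0) := by
          have hp2 : ∀ i, pi3 (α - -α) i = 2 * pi3 α i := by
            intro i
            rw [pi3, pi3, Finset.mul_sum]
            refine Finset.sum_congr rfl fun j _ => ?_
            show α (i, j) - -α (i, j) = 2 * α (i, j)
            have hsub : ∀ u : ZMod 3, u - -u = 2 * u := by decide
            exact hsub _
          constructor <;> intro h <;> funext i <;> have hi := congrFun h i <;>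
            simp only [hp2, Pi.zero_apply] at hi ⊢
          · have : ∀ u : ZMod 3, 2 * u = 0 → u = 0 := by decide
            exact this _ hi
          · rw [hi, mul_zero]
        by_cases hp : pi3 α = 0
        · rw [if_pos (hcond.mpr hp), if_pos hp]
        · rw [if_neg (fun h => hp (hcond.mp h)), if_neg hp]
    · intro β _ hne
      have : ∃ p, β p ≠ -(α p) := by
        by_contra h
        push_neg at h
        exact hne (funext h)
      obtain ⟨p, hp⟩ := this
      have hc : coef (α p) (β p) = 0 := by
        apply coef_eq_zero
        rw [h2u]
        exact hp
      rw [Finset.prod_eq_zero (Finset.mem_univ p) hc]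
      ring
    · intro h
      exact absurd (Finset.mem_univ _) h
  simp_rw [hβ]
  -- real part bound
  rw [Complex.re_sum]
  set filt : Finset G := Finset.univ.filter (fun α : G => pi3 α = 0) with hfilt
  have step1 : (∑ α : G, ((fhat g α * (starRingEnd ℂ) (fhat g (-α))) *
        ((-(1/2) : ℂ)^(nsupp α) * (if pi3 α = 0 then 1 else 0))).re)
      ≤ ∑ α ∈ filt, ‖fhat g α‖ * ‖fhat g (-α)‖ * (1/2 : ℝ)^(nsupp α) := by
    rw [hfilt, Finset.sum_filter]
    refine Finset.sum_le_sum fun α _ => ?_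
    by_cases hp : pi3 α = 0
    · rw [if_pos hp, if_pos hp, mul_one]
      refine le_trans (Complex.re_le_norm _) ?_
      rw [norm_mul, norm_mul, norm_pow]
      have c1 : ‖fhat g α‖ = ‖fhat g α‖ := rfl
      have c2 : ‖(starRingEnd ℂ) (fhat g (-α))‖ = ‖fhat g (-α)‖ := by
        rw [Complex.norm_conj]
      have c3 : ‖(-(1/2) : ℂ)‖ = (1/2 : ℝ) := by
        rw [norm_neg]
        norm_num
      rw [c1, c2, c3]
    · rw [if_neg hp, if_neg hp, mul_zero, mul_zero]
      simp
  refine le_trans step1 ?_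
  have hnegsum : ∑ α ∈ filt, ‖fhat g (-α)‖^2 = ∑ α ∈ filt, ‖fhat g α‖^2 := by
    refine Finset.sum_equiv (Equiv.neg G) ?_ ?_
    · intro α
      simp only [hfilt, Finset.mem_filter, Finset.mem_univ, true_and, Equiv.neg_apply]
      exact (pi3_neg_eq_zero α).symm
    · intro α _
      rfl
  have step2 : (∑ α ∈ filt, ‖fhat g α‖ * ‖fhat g (-α)‖ * (1/2 : ℝ)^(nsupp α))
      ≤ ∑ α ∈ filt, ‖fhat g α‖^2 := by
    calc ∑ α ∈ filt, ‖fhat g α‖ * ‖fhat g (-α)‖ * (1/2 : ℝ)^(nsupp α)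
        ≤ ∑ α ∈ filt, (‖fhat g α‖^2 + ‖fhat g (-α)‖^2) / 2 := by
          refine Finset.sum_le_sum fun α _ => ?_
          have h1 : (0:ℝ) ≤ ‖fhat g α‖ := norm_nonneg _
          have h2 : (0:ℝ) ≤ ‖fhat g (-α)‖ := norm_nonneg _
          have hw1 : ((1:ℝ)/2)^(nsupp α) ≤ 1 := pow_le_one₀ (by norm_num) (by norm_num)
          have hw0 : (0:ℝ) ≤ (1/2 : ℝ)^(nsupp α) := pow_nonneg (by norm_num) _
          nlinarith [sq_nonneg (‖fhat g α‖ - ‖fhat g (-α)‖), mul_nonneg h1 h2]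
      _ = ((∑ α ∈ filt, ‖fhat g α‖^2) + ∑ α ∈ filt, ‖fhat g (-α)‖^2) / 2 := by
          rw [← Finset.sum_add_distrib, Finset.sum_div]
      _ = ∑ α ∈ filt, ‖fhat g α‖^2 := by rw [hnegsum]; ring
  refine le_trans step2 ?_
  unfold evenPart
  refine Finset.sum_le_sum_of_subset_of_nonneg ?_ (fun α _ _ => sq_nonneg _)
  intro α hα
  rw [hfilt, Finset.mem_filter] at hα
  rw [Finset.mem_filter]
  refine ⟨Finset.mem_univ _, ?_⟩
  rw [Fintype.sum_prod_type]
  have : ∀ i : Fin K, ∑ j, α (i, j) = 0 := fun i => congrFun hα.2 i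
  simp [this]
end
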